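/- Let 𝒳 be a Polish space and let μ, ν be Borel probability measures on 𝒳. Then S(ν | μ) = sup over f ∈ C_b(𝒳) of ( ∫ f dν − log ∫ e^f dμ ), as an equality in [0,∞]. -/

import Mathlib

open MeasureTheory Filter Topology
open scoped ENNReal NNReal

section DVauxSection
open Real
namespace DVaux


variable {𝒳 : Type*} [MeasurableSpace 𝒳] {μ ν : Measure 𝒳}

lemma clamp_abs_le {C s t : ℝ} (h1 : -C ≤ s) (h2 : s ≤ C) :
    |max (min t C) (-C) - s| ≤ |t - s| := by
  rcases le_total t C with h | h
  · rw [min_eq_left h]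
    rcases le_total (-C) t with h' | h'
    · rw [max_eq_left h']
    · rw [max_eq_right h', abs_of_nonpos (by linarith), abs_of_nonpos (by linarith)]
      linarith
  · rw [min_eq_right h, max_eq_left (by linarith), abs_of_nonneg (by linarith),
      abs_of_nonneg (by linarith)]
    linarith

lemma exp_sub_exp_abs {a b C : ℝ} (ha : a ≤ C) (hb : b ≤ C) :
    |exp a - exp b| ≤ exp C * |a - b| := by
  wlog hab : b ≤ a generalizing a b
  · rw [abs_sub_comm, abs_sub_comm a b]; exact this hb ha (le_of_not_ge hab)
  rw [abs_of_nonneg (by simp [Real.exp_le_exp, hab]), abs_of_nonneg (by linarith)]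
  have h1 : exp (b - a) * exp a = exp b := by rw [← Real.exp_add]; ring_nf
  nlinarith [Real.add_one_le_exp (b - a), Real.exp_pos a, Real.exp_le_exp.mpr ha]

lemma log_le_add {x y : ℝ} (hx : 0 < x) (hy : 0 < y) : log x ≤ log y + (x - y) / y := by
  have h := Real.log_le_sub_one_of_pos (div_pos hx hy)
  rw [Real.log_div hx.ne' hy.ne'] at h
  have h2 : x / y - 1 = (x - y) / y := by field_simp
  linarith [h2 ▸ h]

lemma integrable_of_bounded [IsFiniteMeasure ν] {f : 𝒳 → ℝ} {C : ℝ}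
    (hm : AEStronglyMeasurable f ν) (hb : ∀ x, |f x| ≤ C) : Integrable f ν :=
  (integrable_const C).mono' hm (ae_of_all _ fun x ↦ (Real.norm_eq_abs _).le.trans (hb x))

lemma gibbs [IsProbabilityMeasure μ] [IsProbabilityMeasure ν] (h : ν ≪ μ)
    (hint : Integrable (llr ν μ) ν) : 0 ≤ ∫ x, llr ν μ x ∂ν := by
  have hexp : Integrable (fun x ↦ exp (-llr ν μ x)) ν :=
    Measure.integrable_toReal_rnDeriv.congr (exp_neg_llr h).symm
  have key : ∫ x, -llr ν μ x ∂ν ≤ ∫ x, (exp (-llr ν μ x) - 1) ∂ν := by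
    refine integral_mono_ae hint.neg (hexp.sub (integrable_const 1)) (ae_of_all _ fun x ↦ ?_)
    dsimp only
    linarith [Real.add_one_le_exp (-llr ν μ x)]
  have h2 : ∫ x, (exp (-llr ν μ x) - 1) ∂ν = ∫ x, exp (-llr ν μ x) ∂ν - 1 := by
    rw [integral_sub hexp (integrable_const 1)]; simp
  have h3 : ∫ x, exp (-llr ν μ x) ∂ν ≤ 1 := by
    rw [integral_congr_ae (exp_neg_llr h), Measure.integral_toReal_rnDeriv']
    simp only [measureReal_def, measure_univ, ENNReal.toReal_one]
    have : (0:ℝ) ≤ ((μ.singularPart ν) Set.univ).toReal := ENNReal.toReal_nonneg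
    linarith
  rw [integral_neg] at key
  linarith

lemma dv_le [IsProbabilityMeasure μ] [IsProbabilityMeasure ν] (h : ν ≪ μ)
    (hint : Integrable (llr ν μ) ν) {f : 𝒳 → ℝ} (hfm : AEStronglyMeasurable f μ)
    (hfm' : AEStronglyMeasurable f ν) {C : ℝ}
    (hfb : ∀ x, |f x| ≤ C) :
    ∫ x, f x ∂ν - log (∫ x, exp (f x) ∂μ) ≤ ∫ x, llr ν μ x ∂ν := by
  have hfν : Integrable f ν := integrable_of_bounded hfm' hfb
  have hexpμ : Integrable (fun x ↦ exp (f x)) μ := by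
    refine integrable_of_bounded (C := exp C) (Real.continuous_exp.comp_aestronglyMeasurable hfm) fun x ↦ ?_
    rw [abs_of_pos (exp_pos _), Real.exp_le_exp]
    exact (le_abs_self _).trans (hfb x)
  have hP : IsProbabilityMeasure (μ.tilted f) := isProbabilityMeasure_tilted hexpμ
  have hac : ν ≪ μ.tilted f := h.trans (absolutelyContinuous_tilted hexpμ)
  have hi2 : Integrable (llr ν (μ.tilted f)) ν :=
    integrable_llr_tilted_right h hfν hint hexpμ
  have heq := integral_llr_tilted_right h hfν hexpμ hint
  have h0 := gibbs hac hi2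
  rw [heq] at h0
  linarith


lemma ereal_le_of_forall_sub {r : ℝ} {y : EReal}
    (h : ∀ ε : ℝ, 0 < ε → ((r - ε : ℝ) : EReal) ≤ y) : (r : EReal) ≤ y := by
  induction y using EReal.rec with
  | bot =>
    have := h 1 one_pos
    simp only [le_bot_iff] at this
    exact absurd this (EReal.coe_ne_bot _)
  | coe s =>
    rw [EReal.coe_le_coe_iff]
    refine le_of_forall_pos_le_add fun ε hε ↦ ?_
    have := h ε hε
    rw [EReal.coe_le_coe_iff] at this
    linarith
  | top => exact le_top

lemma ereal_eq_top {y : EReal} (h : ∀ r : ℝ, (r : EReal) ≤ y) : y = ⊤ := by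
  induction y using EReal.rec with
  | bot => simpa using h 0
  | coe s =>
    have := h (s + 1)
    rw [EReal.coe_le_coe_iff] at this
    linarith
  | top => rfl

lemma integrable_neg_part [IsProbabilityMeasure μ] [IsProbabilityMeasure ν] (h : ν ≪ μ) :
    Integrable (fun x ↦ max (-llr ν μ x) 0) ν := by
  have hexp : Integrable (fun x ↦ exp (-llr ν μ x)) ν :=
    Measure.integrable_toReal_rnDeriv.congr (exp_neg_llr h).symm
  refine hexp.mono' ((measurable_llr _ _).neg.max measurable_const).aestronglyMeasurable
    (ae_of_all _ fun x ↦ ?_)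
  rw [Real.norm_eq_abs, abs_of_nonneg (le_max_right _ _)]
  rcases le_total (-llr ν μ x) 0 with h' | h'
  · rw [max_eq_right h']; exact (Real.exp_pos _).le
  · rw [max_eq_left h']
    linarith [Real.add_one_le_exp (-llr ν μ x)]

lemma exists_integral_min_ge [IsFiniteMeasure ν] {g : 𝒳 → ℝ} (hgm : Measurable g)
    (hg0 : ∀ x, 0 ≤ g x) (hgi : ¬ Integrable g ν) (r : ℝ) :
    ∃ n : ℕ, r ≤ ∫ x, min (g x) n ∂ν := by
  have hlint : ∫⁻ x, ENNReal.ofReal (g x) ∂ν = ∞ := by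
    by_contra hfin
    exact hgi ⟨hgm.aestronglyMeasurable, by
      rw [hasFiniteIntegral_iff_ofReal (ae_of_all _ hg0)]
      exact lt_top_iff_ne_top.2 hfin⟩
  have hmono : Monotone (fun n : ℕ ↦ fun x ↦ ENNReal.ofReal (min (g x) n)) := by
    intro a b hab
    exact fun x ↦ ENNReal.ofReal_le_ofReal (min_le_min le_rfl (by exact_mod_cast hab))
  have hsup : ∀ x, ⨆ n : ℕ, ENNReal.ofReal (min (g x) n) = ENNReal.ofReal (g x) := by
    intro x
    refine le_antisymm (iSup_le fun n ↦ ENNReal.ofReal_le_ofReal (min_le_left _ _)) ?_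
    refine le_iSup_of_le ⌈g x⌉₊ ?_
    rw [min_eq_left (Nat.le_ceil _)]
  have hlim : ⨆ n : ℕ, ∫⁻ x, ENNReal.ofReal (min (g x) n) ∂ν = ∞ := by
    rw [← lintegral_iSup (fun n ↦ (hgm.min measurable_const).ennreal_ofReal) hmono]
    simp_rw [hsup]
    exact hlint
  have hlt : ENNReal.ofReal (max r 0) < ⨆ n : ℕ, ∫⁻ x, ENNReal.ofReal (min (g x) n) ∂ν := by
    rw [hlim]; exact ENNReal.ofReal_lt_top
  obtain ⟨n, hn⟩ := lt_iSup_iff.1 hlt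
  refine ⟨n, ?_⟩
  have hint : Integrable (fun x ↦ min (g x) n) ν := by
    refine integrable_of_bounded (C := n) (hgm.min measurable_const).aestronglyMeasurable
      fun x ↦ ?_
    rw [abs_of_nonneg (le_min (hg0 x) (Nat.cast_nonneg n))]
    exact min_le_right _ _
  have heq : ∫ x, min (g x) n ∂ν = (∫⁻ x, ENNReal.ofReal (min (g x) n) ∂ν).toReal := by
    rw [integral_eq_lintegral_of_nonneg_ae (ae_of_all _ fun x ↦ le_min (hg0 x) (Nat.cast_nonneg n))
      (hgm.min measurable_const).aestronglyMeasurable]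
  have hfin : ∫⁻ x, ENNReal.ofReal (min (g x) n) ∂ν ≠ ∞ := by
    have hb : ∫⁻ x, ENNReal.ofReal (min (g x) n) ∂ν ≤ ∫⁻ _, ENNReal.ofReal n ∂ν :=
      lintegral_mono fun x ↦ ENNReal.ofReal_le_ofReal (min_le_right _ _)
    refine ne_of_lt (lt_of_le_of_lt hb ?_)
    rw [lintegral_const]
    exact ENNReal.mul_lt_top ENNReal.ofReal_lt_top (measure_lt_top _ _)
  have := ENNReal.toReal_mono hfin hn.le
  rw [ENNReal.toReal_ofReal (le_max_right r 0)] at this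
  rw [heq]
  exact le_trans (le_max_left r 0) this


noncomputable def Fn (ν μ : Measure 𝒳) (n : ℕ) (x : 𝒳) : ℝ :=
  if ν.rnDeriv μ x = 0 then -(n : ℝ) else max (min (llr ν μ x) n) (-(n : ℝ))

lemma Fn_meas (ν μ : Measure 𝒳) (n : ℕ) : Measurable (Fn ν μ n) := by
  refine Measurable.ite ?_ measurable_const
    (((measurable_llr _ _).min measurable_const).max measurable_const)
  exact (Measure.measurable_rnDeriv ν μ) (measurableSet_singleton 0)

lemma Fn_bdd (ν μ : Measure 𝒳) (n : ℕ) (x : 𝒳) : |Fn ν μ n x| ≤ n := by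
  rw [Fn, abs_le]
  split_ifs with h
  · constructor <;> simp
  · refine ⟨le_max_right _ _, max_le (min_le_right _ _) (by simp)⟩

lemma Fn_le_max (ν μ : Measure 𝒳) (n : ℕ) (x : 𝒳) :
    Fn ν μ n x ≤ max (llr ν μ x) 0 ∨ ν.rnDeriv μ x = 0 := by
  rw [Fn]
  split_ifs with h
  · exact Or.inr h
  · exact Or.inl (max_le ((min_le_left _ _).trans (le_max_left _ _))
      ((neg_nonpos.2 (Nat.cast_nonneg n)).trans (le_max_right _ _)))

lemma Fn_exp_le (ν μ : Measure 𝒳) (n : ℕ) (x : 𝒳) :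
    exp (Fn ν μ n x) ≤ (ν.rnDeriv μ x).toReal + 1 := by
  rcases Fn_le_max ν μ n x with h | h
  · refine le_trans (Real.exp_le_exp.2 h) ?_
    rcases le_total (llr ν μ x) 0 with h' | h'
    · rw [max_eq_right h', Real.exp_zero]
      linarith [ENNReal.toReal_nonneg (a := ν.rnDeriv μ x)]
    · rw [max_eq_left h']
      rcases eq_or_lt_of_le (ENNReal.toReal_nonneg (a := ν.rnDeriv μ x)) with h0 | h0
      · rw [llr, ← h0, Real.log_zero, Real.exp_zero]; linarith
      · rw [llr, Real.exp_log h0]; linarith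
  · rw [Fn, if_pos h]
    have : exp (-(n:ℝ)) ≤ 1 := Real.exp_le_one_iff.2 (by simp)
    linarith [ENNReal.toReal_nonneg (a := ν.rnDeriv μ x)]

lemma Fn_ae_eq [SigmaFinite μ] [SigmaFinite ν] (hac : ν ≪ μ) (n : ℕ) :
    Fn ν μ n =ᵐ[ν] fun x ↦ max (min (llr ν μ x) n) (-(n : ℝ)) := by
  filter_upwards [Measure.rnDeriv_pos hac] with x hx
  rw [Fn, if_neg hx.ne']

lemma integrable_exp_Fn [IsFiniteMeasure μ] (ν : Measure 𝒳) (n : ℕ) :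
    Integrable (fun x ↦ exp (Fn ν μ n x)) μ := by
  refine integrable_of_bounded (C := exp n)
    (Real.measurable_exp.comp (Fn_meas ν μ n)).aestronglyMeasurable fun x ↦ ?_
  rw [abs_of_pos (exp_pos _), Real.exp_le_exp]
  exact (le_abs_self _).trans (Fn_bdd ν μ n x)

lemma integral_exp_Fn_le [IsProbabilityMeasure μ] [IsProbabilityMeasure ν] (hac : ν ≪ μ)
    (n : ℕ) : ∫ x, exp (Fn ν μ n x) ∂μ ≤ 2 := by
  have h1 : ∫ x, exp (Fn ν μ n x) ∂μ ≤ ∫ x, ((ν.rnDeriv μ x).toReal + 1) ∂μ :=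
    integral_mono (integrable_exp_Fn ν n)
      (Measure.integrable_toReal_rnDeriv.add (integrable_const 1)) (Fn_exp_le ν μ n)
  have h2 : ∫ x, ((ν.rnDeriv μ x).toReal + 1) ∂μ = 2 := by
    rw [integral_add Measure.integrable_toReal_rnDeriv (integrable_const 1),
      Measure.integral_toReal_rnDeriv hac]
    norm_num
  linarith

lemma tendsto_log_integral_exp_Fn [IsProbabilityMeasure μ] [IsProbabilityMeasure ν]
    (hac : ν ≪ μ) :
    Tendsto (fun n ↦ log (∫ x, exp (Fn ν μ n x) ∂μ)) atTop (𝓝 0) := by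
  have h1 : Tendsto (fun n ↦ ∫ x, exp (Fn ν μ n x) ∂μ) atTop
      (𝓝 (∫ x, (ν.rnDeriv μ x).toReal ∂μ)) := by
    refine tendsto_integral_of_dominated_convergence (fun x ↦ (ν.rnDeriv μ x).toReal + 1)
      (fun n ↦ (Real.measurable_exp.comp (Fn_meas ν μ n)).aestronglyMeasurable)
      (Measure.integrable_toReal_rnDeriv.add (integrable_const 1))
      (fun n ↦ ae_of_all _ fun x ↦ by
        rw [Real.norm_eq_abs, abs_of_pos (exp_pos _)]; exact Fn_exp_le ν μ n x) ?_
    filter_upwards [Measure.rnDeriv_lt_top ν μ] with x hx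
    by_cases h0 : ν.rnDeriv μ x = 0
    · have heq : ∀ n : ℕ, exp (Fn ν μ n x) = exp (-(n : ℝ)) := fun n ↦ by
        rw [Fn, if_pos h0]
      have hlim : Tendsto (fun n : ℕ ↦ exp (-(n : ℝ))) atTop (𝓝 0) :=
        Real.tendsto_exp_atBot.comp
          (tendsto_neg_atBot_iff.2 tendsto_natCast_atTop_atTop)
      have : (ν.rnDeriv μ x).toReal = 0 := by rw [h0]; simp
      rw [this]
      exact hlim.congr fun n ↦ (heq n).symm
    · have hpos : 0 < (ν.rnDeriv μ x).toReal := ENNReal.toReal_pos h0 hx.ne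
      have hev : ∀ᶠ n : ℕ in atTop, exp (Fn ν μ n x) = (ν.rnDeriv μ x).toReal := by
        filter_upwards [eventually_ge_atTop ⌈|llr ν μ x|⌉₊] with n hn
        have hn' : |llr ν μ x| ≤ (n : ℝ) := (Nat.le_ceil _).trans (Nat.cast_le.2 hn)
        rw [Fn, if_neg h0, min_eq_left (le_trans (le_abs_self _) hn'),
          max_eq_left (neg_le_of_abs_le hn'), llr, Real.exp_log hpos]
      exact tendsto_const_nhds.congr' (by filter_upwards [hev] with n h using h.symm)
  have h2 : ∫ x, (ν.rnDeriv μ x).toReal ∂μ = 1 := by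
    rw [Measure.integral_toReal_rnDeriv hac]; simp
  rw [h2] at h1
  have h3 := ((Real.continuousAt_log one_ne_zero).tendsto.comp h1)
  simpa [Function.comp_def] using h3

lemma tendsto_integral_Fn [IsProbabilityMeasure μ] [IsProbabilityMeasure ν] (hac : ν ≪ μ)
    (hint : Integrable (llr ν μ) ν) :
    Tendsto (fun n ↦ ∫ x, Fn ν μ n x ∂ν) atTop (𝓝 (∫ x, llr ν μ x ∂ν)) := by
  have habs : ∀ (n : ℕ) x, |max (min (llr ν μ x) n) (-(n : ℝ))| ≤ |llr ν μ x| := by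
    intro n x
    rcases le_total (llr ν μ x) 0 with h | h
    · rw [min_eq_left (h.trans (Nat.cast_nonneg n)), abs_of_nonpos h, abs_le]
      constructor
      · rw [neg_neg]; exact le_max_left _ _
      · exact (max_le h (neg_nonpos.2 (Nat.cast_nonneg n))).trans (neg_nonneg.2 h)
    · rw [max_eq_left ((neg_nonpos.2 (Nat.cast_nonneg n)).trans
        (le_min h (Nat.cast_nonneg n))), abs_le]
      constructor
      · exact (neg_nonpos.2 (abs_nonneg _)).trans (le_min h (Nat.cast_nonneg n))
      · exact (min_le_left _ _).trans (le_abs_self _)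
  have h1 : Tendsto (fun n : ℕ ↦ ∫ x, max (min (llr ν μ x) n) (-(n : ℝ)) ∂ν) atTop
      (𝓝 (∫ x, llr ν μ x ∂ν)) := by
    refine tendsto_integral_of_dominated_convergence (fun x ↦ |llr ν μ x|)
      (fun n ↦ (((measurable_llr _ _).min measurable_const).max
        measurable_const).aestronglyMeasurable)
      hint.abs
      (fun n ↦ ae_of_all _ fun x ↦ by rw [Real.norm_eq_abs]; exact habs n x) ?_
    refine ae_of_all _ fun x ↦ ?_
    have hev : ∀ᶠ n : ℕ in atTop, max (min (llr ν μ x) n) (-(n : ℝ)) = llr ν μ x := by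
      filter_upwards [eventually_ge_atTop ⌈|llr ν μ x|⌉₊] with n hn
      have hn' : |llr ν μ x| ≤ (n : ℝ) := (Nat.le_ceil _).trans (Nat.cast_le.2 hn)
      rw [min_eq_left (le_trans (le_abs_self _) hn'), max_eq_left (neg_le_of_abs_le hn')]
    exact tendsto_const_nhds.congr' (by filter_upwards [hev] with n h using h.symm)
  refine h1.congr fun n ↦ (integral_congr_ae (Fn_ae_eq hac n)).symm

lemma exists_integral_Fn_ge [IsProbabilityMeasure μ] [IsProbabilityMeasure ν] (hac : ν ≪ μ)
    (hnint : ¬ Integrable (llr ν μ) ν) (r : ℝ) :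
    ∃ n : ℕ, r ≤ ∫ x, Fn ν μ n x ∂ν := by
  have hneg : Integrable (fun x ↦ max (-llr ν μ x) 0) ν := integrable_neg_part hac
  set C₀ := ∫ x, max (-llr ν μ x) 0 ∂ν with hC₀
  have hpos : ¬ Integrable (fun x ↦ max (llr ν μ x) 0) ν := by
    intro hp
    refine hnint ((hp.sub hneg).congr (ae_of_all _ fun x ↦ ?_))
    simp [max_zero_sub_max_neg_zero_eq_self]
  obtain ⟨n, hn⟩ := exists_integral_min_ge
    ((measurable_llr _ _).max measurable_const) (fun x ↦ le_max_right _ _) hpos (r + C₀)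
  refine ⟨n, ?_⟩
  -- pointwise identity
  have hid : ∀ x, max (min (llr ν μ x) n) (-(n : ℝ))
      = min (max (llr ν μ x) 0) n - min (max (-llr ν μ x) 0) n := by
    intro x
    rcases le_total (llr ν μ x) 0 with h | h
    · rw [min_eq_left (h.trans (Nat.cast_nonneg n)), max_eq_right h,
        max_eq_left (neg_nonneg.2 h), min_eq_left (show (0:ℝ) ≤ (n:ℝ) from Nat.cast_nonneg n)]
      rcases le_total (-llr ν μ x) (n : ℝ) with h' | h'
      · rw [min_eq_left h', max_eq_left (by linarith)]; ring
      · rw [min_eq_right h', max_eq_right (by linarith)]; ring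
    · rw [max_eq_left ((neg_nonpos.2 (Nat.cast_nonneg n)).trans
        (le_min h (Nat.cast_nonneg n))), max_eq_left h, max_eq_right (neg_nonpos.2 h),
        min_eq_left (show (0:ℝ) ≤ (n:ℝ) from Nat.cast_nonneg n)]
      ring
  have hint1 : Integrable (fun x ↦ min (max (llr ν μ x) 0) n) ν := by
    refine integrable_of_bounded (C := n)
      (((measurable_llr _ _).max measurable_const).min measurable_const).aestronglyMeasurable
      fun x ↦ ?_
    rw [abs_of_nonneg (le_min (le_max_right _ _) (Nat.cast_nonneg n))]
    exact min_le_right _ _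
  have hint2 : Integrable (fun x ↦ min (max (-llr ν μ x) 0) n) ν := by
    refine integrable_of_bounded (C := n)
      (((measurable_llr _ _).neg.max measurable_const).min measurable_const).aestronglyMeasurable
      fun x ↦ ?_
    rw [abs_of_nonneg (le_min (le_max_right _ _) (Nat.cast_nonneg n))]
    exact min_le_right _ _
  have hsub : ∫ x, max (min (llr ν μ x) n) (-(n : ℝ)) ∂ν
      = ∫ x, min (max (llr ν μ x) 0) n ∂ν - ∫ x, min (max (-llr ν μ x) 0) n ∂ν := by
    rw [← integral_sub hint1 hint2]
    exact integral_congr_ae (ae_of_all _ fun x ↦ hid x)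
  have hle : ∫ x, min (max (-llr ν μ x) 0) n ∂ν ≤ C₀ :=
    integral_mono hint2 hneg fun x ↦ min_le_left _ _
  have : r ≤ ∫ x, max (min (llr ν μ x) n) (-(n : ℝ)) ∂ν := by
    rw [hsub]; linarith
  rwa [← integral_congr_ae (Fn_ae_eq hac n)] at this


variable {𝒳 : Type*} [TopologicalSpace 𝒳] [PolishSpace 𝒳] [MeasurableSpace 𝒳] [BorelSpace 𝒳]
  (μ ν : Measure 𝒳) [IsProbabilityMeasure μ] [IsProbabilityMeasure ν]

lemma coe_dv_le_sup {f : 𝒳 → ℝ} (hfm : Measurable f) {C : ℝ} (hC : 0 ≤ C)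
    (hfb : ∀ x, |f x| ≤ C) :
    ((∫ x, f x ∂ν - log (∫ x, exp (f x) ∂μ) : ℝ) : EReal)
      ≤ ⨆ g : BoundedContinuousFunction 𝒳 ℝ,
          (((∫ x, g x ∂ν : ℝ) : EReal) - ((log (∫ x, exp (g x) ∂μ) : ℝ) : EReal)) := by
  letI := TopologicalSpace.pseudoMetrizableSpacePseudoMetric 𝒳
  refine ereal_le_of_forall_sub fun ε hε ↦ ?_
  -- choose δ
  set K := 1 + exp C * exp C with hK
  have hKpos : 0 < K := by positivity
  set δ := ε / K with hδ
  have hδpos : 0 < δ := div_pos hε hKpos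
  -- approximate f in L¹(μ + ν)
  have hρfin : IsFiniteMeasure (μ + ν) := by infer_instance
  have hfρ : Integrable f (μ + ν) :=
    integrable_of_bounded hfm.aestronglyMeasurable hfb
  obtain ⟨g₀, hg₀close, hg₀int⟩ :=
    hfρ.exists_boundedContinuous_integral_sub_le hδpos
  set g : BoundedContinuousFunction 𝒳 ℝ :=
    (g₀ ⊓ BoundedContinuousFunction.const 𝒳 C) ⊔ BoundedContinuousFunction.const 𝒳 (-C)
    with hg
  have hgx : ∀ x, g x = max (min (g₀ x) C) (-C) := fun x ↦ rfl
  have hgb : ∀ x, |g x| ≤ C := by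
    intro x
    rw [hgx, abs_le]
    constructor
    · exact neg_le_neg_iff.mpr le_rfl |>.trans (le_max_right _ _)
    · exact max_le ((min_le_right _ _)) (by linarith)
  have hclose : ∀ x, |f x - g x| ≤ |g₀ x - f x| := by
    intro x
    rw [hgx, abs_sub_comm]
    exact clamp_abs_le (neg_le_of_abs_le (hfb x)) (le_of_abs_le (hfb x))
  -- integrability facts
  have hgm : Measurable g := g.continuous.measurable
  have hfgρ : Integrable (fun x ↦ |f x - g x|) (μ + ν) :=
    integrable_of_bounded ((hfm.sub hgm).abs.aestronglyMeasurable)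
      (fun x ↦ by
        rw [abs_abs]
        calc |f x - g x| ≤ |f x| + |g x| := abs_sub _ _
          _ ≤ C + C := add_le_add (hfb x) (hgb x))
  have hfg0ρ : Integrable (fun x ↦ |g₀ x - f x|) (μ + ν) := by
    have : Integrable (fun x ↦ g₀ x - f x) (μ + ν) :=
      (hg₀int.sub hfρ)
    exact this.abs
  have hsum : ∫ x, |f x - g x| ∂(μ + ν) ≤ δ := by
    calc ∫ x, |f x - g x| ∂(μ + ν) ≤ ∫ x, |g₀ x - f x| ∂(μ + ν) :=
          integral_mono hfgρ hfg0ρ hclose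
      _ = ∫ x, ‖f x - g₀ x‖ ∂(μ + ν) := by
          congr 1; funext x; rw [Real.norm_eq_abs, abs_sub_comm]
      _ ≤ δ := hg₀close
  have hInt : ∀ (κ : Measure 𝒳) [IsProbabilityMeasure κ],
      Integrable (fun x ↦ |f x - g x|) κ ∧ Integrable f κ ∧ Integrable (⇑g) κ := by
    intro κ _
    exact ⟨integrable_of_bounded ((hfm.sub hgm).abs.aestronglyMeasurable)
      (fun x ↦ by
        rw [abs_abs]
        calc |f x - g x| ≤ |f x| + |g x| := abs_sub _ _
          _ ≤ C + C := add_le_add (hfb x) (hgb x)),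
      integrable_of_bounded hfm.aestronglyMeasurable hfb,
      integrable_of_bounded hgm.aestronglyMeasurable hgb⟩
  obtain ⟨hfgμ, hfμ, hgμ⟩ := hInt μ
  obtain ⟨hfgν, hfν, hgν⟩ := hInt ν
  have hsplit : ∫ x, |f x - g x| ∂(μ + ν)
      = ∫ x, |f x - g x| ∂μ + ∫ x, |f x - g x| ∂ν := integral_add_measure hfgμ hfgν
  have hIν : ∫ x, |f x - g x| ∂ν ≤ δ := by
    have h0 : 0 ≤ ∫ x, |f x - g x| ∂μ := integral_nonneg fun x ↦ abs_nonneg _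
    linarith [hsplit ▸ hsum]
  have hIμ : ∫ x, |f x - g x| ∂μ ≤ δ := by
    have h0 : 0 ≤ ∫ x, |f x - g x| ∂ν := integral_nonneg fun x ↦ abs_nonneg _
    linarith [hsplit ▸ hsum]
  -- first estimate : ∫ f dν ≤ ∫ g dν + δ
  have E1 : ∫ x, f x ∂ν ≤ ∫ x, g x ∂ν + δ := by
    have : ∫ x, f x ∂ν - ∫ x, g x ∂ν = ∫ x, (f x - g x) ∂ν := (integral_sub hfν hgν).symm
    have h2 : ∫ x, (f x - g x) ∂ν ≤ ∫ x, |f x - g x| ∂ν :=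
      integral_mono (hfν.sub hgν) hfgν fun x ↦ le_abs_self _
    linarith
  -- second estimate
  have hexpfμ : Integrable (fun x ↦ exp (f x)) μ :=
    integrable_of_bounded (C := exp C) (Real.continuous_exp.comp_aestronglyMeasurable
      hfm.aestronglyMeasurable) fun x ↦ by
        rw [abs_of_pos (exp_pos _), Real.exp_le_exp]; exact le_of_abs_le (hfb x)
  have hexpgμ : Integrable (fun x ↦ exp (g x)) μ :=
    integrable_of_bounded (C := exp C) (Real.continuous_exp.comp_aestronglyMeasurable
      hgm.aestronglyMeasurable) fun x ↦ by
        rw [abs_of_pos (exp_pos _), Real.exp_le_exp]; exact le_of_abs_le (hgb x)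
  have hXpos : 0 < ∫ x, exp (g x) ∂μ := integral_exp_pos hexpgμ
  have hYpos : 0 < ∫ x, exp (f x) ∂μ := integral_exp_pos hexpfμ
  have hYlb : exp (-C) ≤ ∫ x, exp (f x) ∂μ := by
    have : ∫ (_ : 𝒳), exp (-C) ∂μ ≤ ∫ x, exp (f x) ∂μ :=
      integral_mono (integrable_const _) hexpfμ fun x ↦ by
        rw [Real.exp_le_exp]; exact neg_le_of_abs_le (hfb x)
    simpa using this
  have hXY : ∫ x, exp (g x) ∂μ - ∫ x, exp (f x) ∂μ ≤ exp C * δ := by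
    have h1 : ∫ x, exp (g x) ∂μ - ∫ x, exp (f x) ∂μ
        = ∫ x, (exp (g x) - exp (f x)) ∂μ := (integral_sub hexpgμ hexpfμ).symm
    have h2 : ∫ x, (exp (g x) - exp (f x)) ∂μ ≤ ∫ x, exp C * |f x - g x| ∂μ := by
      refine integral_mono (hexpgμ.sub hexpfμ) (hfgμ.const_mul _) fun x ↦ ?_
      dsimp
      calc exp (g x) - exp (f x) ≤ |exp (g x) - exp (f x)| := le_abs_self _
        _ ≤ exp C * |g x - f x| :=
            exp_sub_exp_abs (le_of_abs_le (hgb x)) (le_of_abs_le (hfb x))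
        _ = exp C * |f x - g x| := by rw [abs_sub_comm]
    have h3 : ∫ x, exp C * |f x - g x| ∂μ = exp C * ∫ x, |f x - g x| ∂μ :=
      integral_const_mul _ _
    have h4 : exp C * ∫ x, |f x - g x| ∂μ ≤ exp C * δ := by
      exact mul_le_mul_of_nonneg_left hIμ (Real.exp_nonneg C)
    linarith
  have E2 : log (∫ x, exp (f x) ∂μ) ≥ log (∫ x, exp (g x) ∂μ) - exp C * exp C * δ := by
    have h1 := log_le_add hXpos hYpos
    have hinv : (∫ x, exp (f x) ∂μ)⁻¹ ≤ exp C := by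
      have h' : (∫ x, exp (f x) ∂μ)⁻¹ ≤ (exp (-C))⁻¹ :=
        inv_anti₀ (Real.exp_pos _) hYlb
      rwa [Real.exp_neg, inv_inv] at h'
    have h2 : (∫ x, exp (g x) ∂μ - ∫ x, exp (f x) ∂μ) / (∫ x, exp (f x) ∂μ)
        ≤ (exp C * δ) * exp C := by
      rw [div_eq_mul_inv]
      calc (∫ x, exp (g x) ∂μ - ∫ x, exp (f x) ∂μ) * (∫ x, exp (f x) ∂μ)⁻¹
          ≤ (exp C * δ) * (∫ x, exp (f x) ∂μ)⁻¹ :=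
            mul_le_mul_of_nonneg_right hXY (inv_nonneg.2 hYpos.le)
        _ ≤ (exp C * δ) * exp C :=
            mul_le_mul_of_nonneg_left hinv (by positivity)
    have h3 : exp C * δ * exp C = exp C * exp C * δ := by ring
    linarith
  -- put together
  have final : ∫ x, f x ∂ν - log (∫ x, exp (f x) ∂μ) - ε
      ≤ ∫ x, g x ∂ν - log (∫ x, exp (g x) ∂μ) := by
    have hδK : δ * K = ε := div_mul_cancel₀ ε hKpos.ne'
    have hKe : δ * K = δ + exp C * exp C * δ := by rw [hK]; ring
    linarith
  calc ((∫ x, f x ∂ν - log (∫ x, exp (f x) ∂μ) - ε : ℝ) : EReal)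
      ≤ ((∫ x, g x ∂ν - log (∫ x, exp (g x) ∂μ) : ℝ) : EReal) := by
        exact_mod_cast final
    _ = ((∫ x, g x ∂ν : ℝ) : EReal) - ((log (∫ x, exp (g x) ∂μ) : ℝ) : EReal) := by
        rw [← EReal.coe_sub]
    _ ≤ _ := le_iSup (fun g : BoundedContinuousFunction 𝒳 ℝ ↦
        ((∫ x, g x ∂ν : ℝ) : EReal) - ((log (∫ x, exp (g x) ∂μ) : ℝ) : EReal)) g


lemma coe_ofReal_eq (x : ℝ) :
    ((ENNReal.ofReal x : ℝ≥0∞) : EReal) = ((max x 0 : ℝ) : EReal) := by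
  rw [EReal.coe_ennreal_ofReal]

lemma zero_le_sup [IsProbabilityMeasure μ] :
    (0 : EReal) ≤ ⨆ g : BoundedContinuousFunction 𝒳 ℝ,
        (((∫ x, g x ∂ν : ℝ) : EReal) - ((log (∫ x, exp (g x) ∂μ) : ℝ) : EReal)) := by
  have h0 : (((∫ x, (0 : BoundedContinuousFunction 𝒳 ℝ) x ∂ν : ℝ)) : EReal)
      - ((log (∫ x, exp ((0 : BoundedContinuousFunction 𝒳 ℝ) x) ∂μ) : ℝ) : EReal) = 0 := by
    simp
  exact le_trans (le_of_eq h0.symm)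
    (le_iSup (fun g : BoundedContinuousFunction 𝒳 ℝ ↦
      (((∫ x, g x ∂ν : ℝ) : EReal) - ((log (∫ x, exp (g x) ∂μ) : ℝ) : EReal))) 0)

lemma le_sup_of_integrable (hac : ν ≪ μ) (hint : Integrable (llr ν μ) ν) :
    ((∫ x, llr ν μ x ∂ν : ℝ) : EReal)
      ≤ ⨆ g : BoundedContinuousFunction 𝒳 ℝ,
          (((∫ x, g x ∂ν : ℝ) : EReal) - ((log (∫ x, exp (g x) ∂μ) : ℝ) : EReal)) := by
  refine ereal_le_of_forall_sub fun ε hε ↦ ?_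
  have hD : Tendsto (fun n ↦ ∫ x, Fn ν μ n x ∂ν - log (∫ x, exp (Fn ν μ n x) ∂μ)) atTop
      (𝓝 (∫ x, llr ν μ x ∂ν - 0)) :=
    (tendsto_integral_Fn hac hint).sub (tendsto_log_integral_exp_Fn hac)
  rw [sub_zero] at hD
  obtain ⟨n, hn⟩ := (hD.eventually (eventually_gt_nhds
    (show ∫ x, llr ν μ x ∂ν - ε < ∫ x, llr ν μ x ∂ν by linarith))).exists
  refine le_trans ?_ (coe_dv_le_sup μ ν (Fn_meas ν μ n) (Nat.cast_nonneg n) (Fn_bdd ν μ n))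
  exact_mod_cast hn.le

lemma sup_eq_top_of_not_integrable (hac : ν ≪ μ) (hnint : ¬ Integrable (llr ν μ) ν) :
    (⨆ g : BoundedContinuousFunction 𝒳 ℝ,
        (((∫ x, g x ∂ν : ℝ) : EReal) - ((log (∫ x, exp (g x) ∂μ) : ℝ) : EReal))) = ⊤ := by
  refine ereal_eq_top fun r ↦ ?_
  obtain ⟨n, hn⟩ := exists_integral_Fn_ge hac hnint (r + Real.log 2)
  have hlog : log (∫ x, exp (Fn ν μ n x) ∂μ) ≤ Real.log 2 :=
    Real.log_le_log (integral_exp_pos (integrable_exp_Fn ν n)) (integral_exp_Fn_le hac n)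
  refine le_trans ?_ (coe_dv_le_sup μ ν (Fn_meas ν μ n) (Nat.cast_nonneg n) (Fn_bdd ν μ n))
  have h : r ≤ ∫ x, Fn ν μ n x ∂ν - log (∫ x, exp (Fn ν μ n x) ∂μ) := by linarith
  exact_mod_cast h

lemma sup_eq_top_of_not_ac (hac : ¬ ν ≪ μ) :
    (⨆ g : BoundedContinuousFunction 𝒳 ℝ,
        (((∫ x, g x ∂ν : ℝ) : EReal) - ((log (∫ x, exp (g x) ∂μ) : ℝ) : EReal))) = ⊤ := by
  refine ereal_eq_top fun r ↦ ?_
  obtain ⟨s, hμs, hνs⟩ : ∃ s, μ s = 0 ∧ ν s ≠ 0 := by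
    by_contra h
    push_neg at h
    exact hac (Measure.AbsolutelyContinuous.mk fun s _ h0 ↦ h s h0)
  set t := toMeasurable μ s with ht
  have ht_meas : MeasurableSet t := measurableSet_toMeasurable μ s
  have hμt : μ t = 0 := by rw [ht, measure_toMeasurable]; exact hμs
  have hνt : 0 < ν t := lt_of_lt_of_le (pos_iff_ne_zero.mpr hνs)
    (measure_mono (subset_toMeasurable μ s))
  set a := (ν t).toReal with ha
  have hapos : 0 < a := ENNReal.toReal_pos hνt.ne' (measure_ne_top _ _)
  set c := max r 0 / a with hc
  have hc0 : 0 ≤ c := div_nonneg (le_max_right r 0) hapos.le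
  set f : 𝒳 → ℝ := t.indicator (fun _ ↦ c) with hf
  have hfm : Measurable f := measurable_const.indicator ht_meas
  have hfb : ∀ x, |f x| ≤ c := by
    intro x
    rw [hf, Set.indicator]
    split_ifs
    · rw [abs_of_nonneg hc0]
    · rw [abs_zero]; exact hc0
  have hint1 : ∫ x, f x ∂ν = max r 0 := by
    rw [hf, integral_indicator_const c ht_meas, smul_eq_mul, measureReal_def, ← ha, hc]
    field_simp
  have hint2 : ∫ x, exp (f x) ∂μ = 1 := by
    have hae : (fun x ↦ exp (f x)) =ᵐ[μ] fun _ ↦ 1 := by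
      filter_upwards [measure_eq_zero_iff_ae_notMem.mp hμt] with x hx
      rw [hf, Set.indicator_of_notMem hx, Real.exp_zero]
    rw [integral_congr_ae hae]
    simp
  refine le_trans ?_ (coe_dv_le_sup μ ν hfm hc0 hfb)
  have h : r ≤ ∫ x, f x ∂ν - log (∫ x, exp (f x) ∂μ) := by
    rw [hint1, hint2, Real.log_one, sub_zero]
    exact le_max_left r 0
  exact_mod_cast h

end DVaux

end DVauxSection

-- Relative entropy (Kullback–Leibler divergence) `S(ν | μ)`, valued in `[0, ∞]`:
-- `S(ν | μ) = ∫ log (dν/dμ) dν` if `ν ≪ μ` (and the integral exists), and `∞` otherwise.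
open scoped Classical in
noncomputable def relEnt {𝒳 : Type*} [MeasurableSpace 𝒳] (ν μ : Measure 𝒳) : ℝ≥0∞ :=
  if ν ≪ μ ∧ Integrable (llr ν μ) ν then ENNReal.ofReal (∫ x, llr ν μ x ∂ν) else ⊤

/-- Donsker–Varadhan: `S(ν | μ) = sup_{f ∈ C_b(𝒳)} ( ∫ f dν − log ∫ e^f dμ )`,
as an equality in `[0, ∞]` (formulated in the extended reals). -/
theorem relEnt_eq_sup_over_boundedContinuousFunctions
    {𝒳 : Type*} [TopologicalSpace 𝒳] [PolishSpace 𝒳] [MeasurableSpace 𝒳] [BorelSpace 𝒳]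
    (μ ν : ProbabilityMeasure 𝒳) :
    ((relEnt (ν : Measure 𝒳) (μ : Measure 𝒳) : ℝ≥0∞) : EReal)
      = ⨆ f : BoundedContinuousFunction 𝒳 ℝ,
          (((∫ x, f x ∂(ν : Measure 𝒳) : ℝ) : EReal)
            - ((Real.log (∫ x, Real.exp (f x) ∂(μ : Measure 𝒳)) : ℝ) : EReal)) := by
  refine le_antisymm ?_ (iSup_le fun f ↦ ?_)
  · rw [relEnt]
    split_ifs with hc
    · obtain ⟨hac, hint⟩ := hc
      rw [DVaux.coe_ofReal_eq]
      rcases le_total (∫ x, llr (ν : Measure 𝒳) (μ : Measure 𝒳) x ∂(ν : Measure 𝒳)) 0 with h | h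
      · rw [max_eq_right h]
        exact DVaux.zero_le_sup _ _
      · rw [max_eq_left h]
        exact DVaux.le_sup_of_integrable _ _ hac hint
    · rw [EReal.coe_ennreal_top]
      rcases not_and_or.1 hc with hac | hint
      · exact le_of_eq (DVaux.sup_eq_top_of_not_ac _ _ hac).symm
      · by_cases hac : (ν : Measure 𝒳) ≪ (μ : Measure 𝒳)
        · exact le_of_eq (DVaux.sup_eq_top_of_not_integrable _ _ hac hint).symm
        · exact le_of_eq (DVaux.sup_eq_top_of_not_ac _ _ hac).symm
  · rw [relEnt]
    split_ifs with hc
    · obtain ⟨hac, hint⟩ := hc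
      have hdv := DVaux.dv_le (μ := (μ : Measure 𝒳)) (ν := (ν : Measure 𝒳)) hac hint
        (f.continuous.measurable.aestronglyMeasurable)
        (f.continuous.measurable.aestronglyMeasurable) (C := ‖f‖)
        (fun x ↦ by rw [← Real.norm_eq_abs]; exact f.norm_coe_le_norm x)
      rw [← EReal.coe_sub, DVaux.coe_ofReal_eq]
      exact EReal.coe_le_coe_iff.2 (hdv.trans (le_max_left _ _))
    · exact le_top
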